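/- Let X be a complex Banach space and A a positive operator on X with constant M ≥ 1. For every α ∈ (0,1), the Bochner integral A^{-α} := (sin(πα)/π) ∫₀^∞ s^{-α} (s+A)^{-1} ds converges in L(X) and satisfies ‖A^{-α}‖ ≤ M; in particular the family (A^{-α})_{α∈(0,1)} is uniformly bounded. -/

import Mathlib

open MeasureTheory Real Set

set_option synthInstance.maxHeartbeats 1000000

noncomputable section

/-- `R` is a two-sided bounded inverse of `lam + A : D(A) → X`;
in particular `lam + A` is bijective from `D(A)` onto `X` with bounded inverse `R`. -/
def ResolventAt {X : Type*} [NormedAddCommGroup X] [NormedSpace ℂ X]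
    (A : X →ₗ.[ℂ] X) (lam : ℂ) (R : X →L[ℂ] X) : Prop :=
  (∀ x : A.domain, R (lam • (x : X) + A x) = x) ∧
  (∀ y : X, ∃ h : R y ∈ A.domain, lam • R y + A ⟨R y, h⟩ = y)

/-- `A` is a positive operator with constant `M ≥ 1` and resolvent family `R`. -/
structure IsPositive {X : Type*} [NormedAddCommGroup X] [NormedSpace ℂ X]
    (A : X →ₗ.[ℂ] X) (M : ℝ) (R : ℝ → X →L[ℂ] X) : Prop where
  dense_domain : Dense (A.domain : Set X)
  closed_graph : IsClosed (A.graph : Set (X × X))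
  one_le : 1 ≤ M
  resolvent : ∀ s : ℝ, 0 ≤ s → ResolventAt A (s : ℂ) (R s)
  bound : ∀ s : ℝ, 0 ≤ s → (1 + s) * ‖R s‖ ≤ M

/-- The Balakrishnan fractional power `A ^ (-α)`, expressed through the
resolvent family `R` of `A`:  `A⁻ᵅ = (sin (π α) / π) ∫₀^∞ s⁻ᵅ (s+A)⁻¹ ds`. -/
def negPow {X : Type*} [NormedAddCommGroup X] [NormedSpace ℂ X]
    (R : ℝ → X →L[ℂ] X) (α : ℝ) : X →L[ℂ] X :=
  (Real.sin (π * α) / π) • ∫ s in Ioi (0 : ℝ), s ^ (-α) • R s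

lemma beta_real {α : ℝ} (hα : α ∈ Ioo (0:ℝ) 1) :
    IntegrableOn (fun u : ℝ => u ^ (-α) * (1 - u) ^ (α - 1)) (Ioo 0 1) ∧
    ∫ u in Ioo (0:ℝ) 1, u ^ (-α) * (1 - u) ^ (α - 1) = π / Real.sin (π * α) := by
  set g : ℝ → ℝ := fun u => u ^ (-α) * (1 - u) ^ (α - 1) with hg
  set F : ℝ → ℂ := fun x => (x:ℂ) ^ ((1 - (α:ℂ)) - 1) * (1 - (x:ℂ)) ^ ((α:ℂ) - 1) with hF
  have hu : 0 < ((1:ℂ) - (α:ℂ)).re := by simp [Complex.sub_re]; linarith [hα.2]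
  have hv : 0 < ((α:ℂ)).re := by simpa using hα.1
  have hFI : IntervalIntegrable F volume 0 1 := Complex.betaIntegral_convergent hu hv
  have hFIoo : IntegrableOn F (Ioo 0 1) :=
    (intervalIntegrable_iff_integrableOn_Ioo_of_le (by norm_num)).mp hFI
  have hcong : ∀ x ∈ Ioo (0:ℝ) 1, F x = ((g x : ℝ) : ℂ) := by
    intro x hx
    have hx0 : (0:ℝ) ≤ x := hx.1.le
    have hx1 : (0:ℝ) ≤ 1 - x := by linarith [hx.2]
    simp only [hF, hg]
    rw [show ((1:ℂ) - ↑α - 1) = ((-α : ℝ) : ℂ) by push_cast; ring,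
      show ((α:ℂ) - 1) = ((α - 1 : ℝ) : ℂ) by push_cast; ring,
      show ((1:ℂ) - ↑x) = ((1 - x : ℝ) : ℂ) by push_cast; ring,
      ← Complex.ofReal_cpow hx0, ← Complex.ofReal_cpow hx1, Complex.ofReal_mul]
  have hgI : IntegrableOn g (Ioo 0 1) := by
    refine hFIoo.norm.congr ?_
    filter_upwards [ae_restrict_mem measurableSet_Ioo] with x hx
    have h1 : (0:ℝ) ≤ g x :=
      mul_nonneg (rpow_nonneg hx.1.le _) (rpow_nonneg (by linarith [hx.2]) _)
    rw [hcong x hx]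
    simp [abs_of_nonneg h1]
  refine ⟨hgI, ?_⟩
  have key : ((∫ u in Ioo (0:ℝ) 1, g u : ℝ) : ℂ) = (π : ℂ) / Complex.sin (π * α) := by
    rw [show ((∫ u in Ioo (0:ℝ) 1, g u : ℝ) : ℂ) = ∫ u in Ioo (0:ℝ) 1, ((g u : ℝ) : ℂ) from
      (integral_ofReal (𝕜 := ℂ)).symm]
    rw [← setIntegral_congr_fun measurableSet_Ioo hcong]
    have h1 : ∫ u in Ioo (0:ℝ) 1, F u = Complex.betaIntegral (1 - (α:ℂ)) (α:ℂ) := by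
      rw [← integral_Ioc_eq_integral_Ioo, Complex.betaIntegral,
        intervalIntegral.integral_of_le (by norm_num : (0:ℝ) ≤ 1)]
    rw [h1]
    have h2 := Complex.Gamma_mul_Gamma_eq_betaIntegral hu hv
    rw [show (1 - (α:ℂ)) + (α:ℂ) = 1 by ring, Complex.Gamma_one, one_mul] at h2
    rw [← h2, mul_comm, Complex.Gamma_mul_Gamma_one_sub]
  have hsin : Complex.sin ((π:ℂ) * (α:ℂ)) = ((Real.sin (π * α) : ℝ) : ℂ) := by
    norm_num
  rw [hsin] at key
  exact_mod_cast key

lemma subst_key {α : ℝ} (hα : α ∈ Ioo (0:ℝ) 1) :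
    IntegrableOn (fun s : ℝ => s ^ (-α) / (1 + s)) (Ioi 0) ∧
    ∫ s in Ioi (0:ℝ), s ^ (-α) / (1 + s) = π / Real.sin (π * α) := by
  set g : ℝ → ℝ := fun u => u ^ (-α) * (1 - u) ^ (α - 1) with hg
  set f : ℝ → ℝ := fun s => s / (1 + s) with hf
  set f' : ℝ → ℝ := fun s => ((1 + s) ^ 2)⁻¹ with hf'
  have a1 : ∀ x ∈ Ioi (0:ℝ), HasDerivWithinAt f (f' x) (Ioi 0) x := by
    intro x hx
    have hx0 : (0:ℝ) < x := hx
    have hx1 : (1:ℝ) + x ≠ 0 := by positivity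
    have : HasDerivAt (fun s : ℝ => s / (1 + s)) ((1 * (1 + x) - x * 1) / (1 + x) ^ 2) x :=
      (hasDerivAt_id x).div ((hasDerivAt_id x).const_add 1) hx1
    rw [show f' x = (1 * (1 + x) - x * 1) / (1 + x) ^ 2 by
      show ((1 + x) ^ 2)⁻¹ = _
      field_simp
      ring]
    exact this.hasDerivWithinAt
  have a2 : InjOn f (Ioi 0) := by
    intro x hx y hy hxy
    have hx1 : (0:ℝ) < 1 + x := by have := mem_Ioi.mp hx; linarith
    have hy1 : (0:ℝ) < 1 + y := by have := mem_Ioi.mp hy; linarith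
    have := (div_eq_div_iff hx1.ne' hy1.ne').mp hxy
    nlinarith
  have a3 : f '' (Ioi 0) = Ioo 0 1 := by
    ext u
    constructor
    · rintro ⟨s, hs, rfl⟩
      have hs0 : (0:ℝ) < s := hs
      have hs1 : (0:ℝ) < 1 + s := by linarith
      constructor
      · positivity
      · rw [div_lt_one hs1]; linarith
    · intro hu
      refine ⟨u / (1 - u), ?_, ?_⟩
      · have : (0:ℝ) < 1 - u := by linarith [hu.2]
        exact div_pos hu.1 this
      · have h1u : (0:ℝ) < 1 - u := by linarith [hu.2]
        simp only [hf]
        have hpos : (0:ℝ) < 1 + u / (1 - u) := by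
          have := div_pos hu.1 h1u; linarith
        rw [div_eq_iff hpos.ne']
        field_simp
        ring
  have a4 : ∀ x ∈ Ioi (0:ℝ), |f' x| • g (f x) = x ^ (-α) / (1 + x) := by
    intro x hx
    have hx0 : (0:ℝ) < x := hx
    have hx1 : (0:ℝ) < 1 + x := by linarith
    have e1 : f x = x * (1 + x)⁻¹ := by simp [hf, div_eq_mul_inv]
    have e2 : (1:ℝ) - f x = (1 + x)⁻¹ := by
      simp only [hf]; field_simp; ring
    have e3 : g (f x) = x ^ (-α) * (1 + x) := by
      show (f x) ^ (-α) * (1 - f x) ^ (α - 1) = _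
      rw [e2, e1]
      rw [mul_rpow hx0.le (by positivity), mul_assoc,
        ← Real.rpow_add (by positivity : (0:ℝ) < (1 + x)⁻¹),
        show -α + (α - 1) = (-1 : ℝ) by ring, rpow_neg_one, inv_inv]
    rw [e3]
    have e4 : |f' x| = ((1 + x) ^ 2)⁻¹ := by
      simp only [hf']
      rw [abs_of_pos (by positivity)]
    rw [e4, smul_eq_mul]
    field_simp
  have himg := integrableOn_image_iff_integrableOn_abs_deriv_smul measurableSet_Ioi a1 a2 g
  rw [a3] at himg
  have hval := integral_image_eq_integral_abs_deriv_smul measurableSet_Ioi a1 a2 g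
  rw [a3] at hval
  obtain ⟨hbI, hbV⟩ := beta_real hα
  constructor
  · exact ((himg.mp hbI).congr_fun a4 measurableSet_Ioi)
  · rw [← setIntegral_congr_fun measurableSet_Ioi a4, ← hval, hbV]

section Ops
variable {X : Type*} [NormedAddCommGroup X] [NormedSpace ℂ X]
  {M : ℝ} {A : X →ₗ.[ℂ] X} {R : ℝ → X →L[ℂ] X}

lemma norm_R_le (hA : IsPositive A M R) {s : ℝ} (hs : 0 ≤ s) : ‖R s‖ ≤ M := by
  have h := hA.bound s hs
  have h0 : (0:ℝ) ≤ ‖R s‖ := norm_nonneg _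
  nlinarith

lemma norm_R_le' (hA : IsPositive A M R) {s : ℝ} (hs : 0 ≤ s) : ‖R s‖ ≤ M / (1 + s) := by
  have h := hA.bound s hs
  have h1 : (0:ℝ) < 1 + s := by linarith
  rw [le_div_iff₀ h1]
  linarith [h]

lemma resolvent_id (hA : IsPositive A M R) {s t : ℝ} (hs : 0 ≤ s) (ht : 0 ≤ t) (y : X) :
    R s y = R t y + ((t:ℂ) - s) • R s (R t y) := by
  obtain ⟨h, hy⟩ := (hA.resolvent t ht).2 y
  set x : A.domain := ⟨R t y, h⟩ with hx
  have h1 := (hA.resolvent s hs).1 x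
  have h2 : (s:ℂ) • (x : X) + A x = y + (((s:ℂ) - t) • (x : X)) := by
    have : (s:ℂ) • (x : X) + A x = ((t:ℂ) • (x : X) + A x) + ((s:ℂ) - t) • (x : X) := by
      rw [sub_smul]; abel
    rw [this, hx]
    simp only [hx] at hy ⊢
    rw [hy]
  rw [h2, map_add, (R s).map_smul] at h1
  have hxv : (x : X) = R t y := rfl
  rw [hxv] at h1
  have : R s y = R t y - ((s:ℂ) - t) • R s (R t y) := eq_sub_of_add_eq h1
  rw [this, show ((t:ℂ) - s) = -((s:ℂ) - t) by ring, neg_smul]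
  abel

lemma R_lipschitz (hA : IsPositive A M R) {s t : ℝ} (hs : 0 ≤ s) (ht : 0 ≤ t) :
    ‖R s - R t‖ ≤ M ^ 2 * |s - t| := by
  refine ContinuousLinearMap.opNorm_le_bound _ (by positivity) fun y => ?_
  have h := resolvent_id hA hs ht y
  have h2 : (R s - R t) y = ((t:ℂ) - s) • R s (R t y) := by
    rw [ContinuousLinearMap.sub_apply, h]; abel
  rw [h2, norm_smul]
  have h3 : ‖(t:ℂ) - s‖ = |s - t| := by
    rw [show (t:ℂ) - s = ((t - s : ℝ) : ℂ) by push_cast; ring, Complex.norm_real,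
      Real.norm_eq_abs, abs_sub_comm]
  rw [h3]
  have h4 : ‖R s (R t y)‖ ≤ M * (M * ‖y‖) := by
    calc ‖R s (R t y)‖ ≤ ‖R s‖ * ‖R t y‖ := (R s).le_opNorm _
    _ ≤ M * (M * ‖y‖) := by
        have := (R t).le_opNorm y
        have h5 : ‖R t y‖ ≤ M * ‖y‖ :=
          le_trans this (mul_le_mul_of_nonneg_right (norm_R_le hA ht) (norm_nonneg _))
        exact mul_le_mul (norm_R_le hA hs) h5 (norm_nonneg _)
          (le_trans zero_le_one hA.one_le)
  calc |s - t| * ‖R s (R t y)‖ ≤ |s - t| * (M * (M * ‖y‖)) :=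
        mul_le_mul_of_nonneg_left h4 (abs_nonneg _)
  _ = M ^ 2 * |s - t| * ‖y‖ := by ring

lemma R_continuousOn (hA : IsPositive A M R) : ContinuousOn R (Ici 0) := by
  have : LipschitzOnWith (Real.toNNReal (M ^ 2)) R (Ici 0) := by
    rw [lipschitzOnWith_iff_dist_le_mul]
    intro s hs t ht
    rw [dist_eq_norm, Real.dist_eq]
    calc ‖R s - R t‖ ≤ M ^ 2 * |s - t| := R_lipschitz hA hs ht
    _ ≤ (Real.toNNReal (M ^ 2)) * |s - t| := by
        gcongr
        exact Real.le_coe_toNNReal _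
  exact this.continuousOn

end Ops

theorem stmt1 {X : Type*} [NormedAddCommGroup X] [NormedSpace ℂ X] [CompleteSpace X]
    (M : ℝ) (A : X →ₗ.[ℂ] X) (R : ℝ → X →L[ℂ] X) (hA : IsPositive A M R)
    (α : ℝ) (hα : α ∈ Ioo (0 : ℝ) 1) :
    IntegrableOn (fun s : ℝ => s ^ (-α) • R s) (Ioi 0) ∧
    ‖negPow R α‖ ≤ M := by
  obtain ⟨hkI, hkV⟩ := subst_key hα
  have hsin : 0 < Real.sin (π * α) := by
    apply Real.sin_pos_of_pos_of_lt_pi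
    · exact mul_pos pi_pos hα.1
    · nlinarith [pi_pos, hα.2]
  have hRmeas : AEStronglyMeasurable R (volume.restrict (Ioi 0)) :=
    ((R_continuousOn hA).mono Ioi_subset_Ici_self).aestronglyMeasurable measurableSet_Ioi
  have hpow : AEStronglyMeasurable (fun s : ℝ => s ^ (-α)) (volume.restrict (Ioi 0)) :=
    (continuousOn_id.rpow_const fun x hx => Or.inl (ne_of_gt hx)).aestronglyMeasurable
      measurableSet_Ioi
  have hmeas : AEStronglyMeasurable (fun s : ℝ => s ^ (-α) • R s)
      (volume.restrict (Ioi 0)) := hpow.smul hRmeas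
  have hbound_int : IntegrableOn (fun s : ℝ => M * (s ^ (-α) / (1 + s))) (Ioi 0) :=
    hkI.const_mul M
  have hle : ∀ s ∈ Ioi (0:ℝ), ‖s ^ (-α) • R s‖ ≤ M * (s ^ (-α) / (1 + s)) := by
    intro s hs
    have hs0 : (0:ℝ) < s := hs
    have h1s : (0:ℝ) < 1 + s := by linarith
    rw [norm_smul (s ^ (-α)) (R s), Real.norm_eq_abs, abs_of_nonneg (rpow_nonneg hs0.le _)]
    have := norm_R_le' hA hs0.le
    calc s ^ (-α) * ‖R s‖ ≤ s ^ (-α) * (M / (1 + s)) :=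
          mul_le_mul_of_nonneg_left this (rpow_nonneg hs0.le _)
    _ = M * (s ^ (-α) / (1 + s)) := by ring
  have hInt : IntegrableOn (fun s : ℝ => s ^ (-α) • R s) (Ioi 0) :=
    Integrable.mono' hbound_int hmeas
      ((ae_restrict_iff' measurableSet_Ioi).mpr (ae_of_all _ hle))
  refine ⟨hInt, ?_⟩
  rw [negPow]
  have hsm : ‖(Real.sin (π * α) / π) • ∫ s in Ioi (0:ℝ), s ^ (-α) • R s‖ ≤
      (Real.sin (π * α) / π) * ‖∫ s in Ioi (0:ℝ), s ^ (-α) • R s‖ := by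
    have h := ContinuousLinearMap.opNorm_smul_le (𝕜' := ℝ)
      (Real.sin (π * α) / π) (∫ s in Ioi (0:ℝ), s ^ (-α) • R s)
    rwa [Real.norm_eq_abs, abs_of_nonneg (by positivity : (0:ℝ) ≤ Real.sin (π * α) / π)] at h
  refine le_trans hsm ?_
  have h1 : ‖∫ s in Ioi (0:ℝ), s ^ (-α) • R s‖ ≤ M * (π / Real.sin (π * α)) := by
    calc ‖∫ s in Ioi (0:ℝ), s ^ (-α) • R s‖
        ≤ ∫ s in Ioi (0:ℝ), ‖s ^ (-α) • R s‖ := norm_integral_le_integral_norm _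
    _ ≤ ∫ s in Ioi (0:ℝ), M * (s ^ (-α) / (1 + s)) :=
        setIntegral_mono_on hInt.norm hbound_int measurableSet_Ioi hle
    _ = M * (π / Real.sin (π * α)) := by rw [integral_const_mul, hkV]
  calc Real.sin (π * α) / π * ‖∫ s in Ioi (0:ℝ), s ^ (-α) • R s‖
      ≤ Real.sin (π * α) / π * (M * (π / Real.sin (π * α))) := by
        apply mul_le_mul_of_nonneg_left h1 (by positivity)
  _ = M := by
      field_simp
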